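/- Let P : ℝⁿ → ℝ be a non-constant polynomial function. Then the zero set P⁻¹(0) is a porous subset of ℝⁿ. -/

import Mathlib

open Metric Filter Set

/-- γ(x,R,X): sup of radii r ≥ 0 of open balls contained in B_R(x) \ X (sup ∅ = 0). -/
noncomputable def porGamma {E : Type*} [SeminormedAddCommGroup E] (x : E) (R : ℝ) (X : Set E) : ℝ :=
  sSup {r : ℝ | 0 ≤ r ∧ ∃ x' : E, ball x' r ⊆ ball x R \ X}

/-- Porosity of X at x: liminf_{R→0⁺} γ(x,R,X)/R. -/
noncomputable def porosityAt {E : Type*} [SeminormedAddCommGroup E] (x : E) (X : Set E) : ℝ :=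
  liminf (fun R => porGamma x R X / R) (nhdsWithin 0 (Ioi 0))

/-- X is porous if its porosity is positive at each of its points. -/
def IsPorous {E : Type*} [SeminormedAddCommGroup E] (X : Set E) : Prop :=
  ∀ x ∈ X, 0 < porosityAt x X

/-- X is σ-porous if it is a countable union of porous sets. -/
def IsSigmaPorous {E : Type*} [SeminormedAddCommGroup E] (X : Set E) : Prop :=
  ∃ f : ℕ → Set E, (∀ k, IsPorous (f k)) ∧ X = ⋃ k, f k

/-- Asymptotic cone of X. -/
def asympCone {E : Type*} [SeminormedAddCommGroup E] [NormedSpace ℝ E] (X : Set E) : Set E :=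
  {v | ∃ (x : ℕ → E) (t : ℕ → ℝ), (∀ k, x k ∈ X) ∧ (∀ k, 0 < t k) ∧
    Tendsto (fun k => ‖x k‖) atTop atTop ∧ Tendsto (fun k => t k • x k) atTop (nhds v)}

lemma aux_eval_smul {n k : ℕ} {φ : MvPolynomial (Fin n) ℝ} (hφ : φ.IsHomogeneous k)
    (r : ℝ) (w : Fin n → ℝ) :
    MvPolynomial.eval (fun i => r * w i) φ = r ^ k * MvPolynomial.eval w φ := by
  rw [MvPolynomial.eval_eq', MvPolynomial.eval_eq', Finset.mul_sum]
  refine Finset.sum_congr rfl fun d hd => ?_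
  have hdeg : ∑ i, d i = k := by
    have h1 := hφ (MvPolynomial.mem_support_iff.mp hd)
    replace h1 : Finsupp.degree d = k := by rw [Finsupp.degree_eq_weight_one (R := ℕ)]; exact h1
    rw [← h1, Finsupp.degree]
    exact (Finset.sum_subset (Finset.subset_univ _)
      (fun i _ h => by simpa using Finsupp.notMem_support_iff.mp h)).symm
  calc MvPolynomial.coeff d φ * ∏ i, (r * w i) ^ d i
      = MvPolynomial.coeff d φ * ((∏ i, r ^ d i) * ∏ i, w i ^ d i) := by
        rw [← Finset.prod_mul_distrib]; simp_rw [mul_pow]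
    _ = r ^ k * (MvPolynomial.coeff d φ * ∏ i, w i ^ d i) := by
        rw [Finset.prod_pow_eq_pow_sum, hdeg]; ring

lemma aux_coords_continuous {n : ℕ} :
    Continuous fun y : EuclideanSpace ℝ (Fin n) => (fun i => y i : Fin n → ℝ) :=
  continuous_pi fun i => (continuous_apply i).comp (PiLp.continuous_ofLp 2 _)

open MvPolynomial in
theorem polynomial_zeroSet_porous {n : ℕ} (P : MvPolynomial (Fin n) ℝ)
    (hP : ¬ ∃ c : ℝ, P = MvPolynomial.C c) :
    IsPorous {x : EuclideanSpace ℝ (Fin n) | MvPolynomial.eval (fun i => x i) P = 0} := by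
  classical
  rcases Nat.eq_zero_or_pos n with hn | hn
  · exfalso; apply hP; subst hn
    obtain ⟨c, hc⟩ := C_surjective (Fin 0) P
    exact ⟨c, hc.symm⟩
  intro x hx
  simp only [Set.mem_setOf_eq] at hx
  set Z : Set (EuclideanSpace ℝ (Fin n)) :=
    {x : EuclideanSpace ℝ (Fin n) | MvPolynomial.eval (fun i => x i) P = 0} with hZdef
  set Q : MvPolynomial (Fin n) ℝ := eval₂ C (fun i => X i + C (x i)) P with hQdef
  have hQeval : ∀ v : Fin n → ℝ, eval v Q = eval (fun i => v i + x i) P := by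
    intro v
    rw [hQdef, eval_eval₂]
    have h1 : (eval v).comp (C : ℝ →+* MvPolynomial (Fin n) ℝ) = RingHom.id ℝ := by
      ext a; simp
    rw [h1, eval₂_id]
    have h2 : (fun s => eval v (X s + C (x s))) = fun i => v i + x i := by
      funext i; simp
    rw [h2]
  have hQne : Q ≠ 0 := by
    intro h0
    apply hP
    have hall : ∀ v : Fin n → ℝ, eval v P = 0 := by
      intro v
      have h2 := hQeval (fun i => v i - x i)
      rw [h0] at h2
      simp only [map_zero] at h2
      have h3 : (fun i => v i - x i + x i) = v := by funext i; ring
      rw [h3] at h2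
      exact h2.symm
    exact ⟨0, MvPolynomial.funext fun v => by simp [hall v]⟩
  have hex : ∃ k, homogeneousComponent k Q ≠ 0 := by
    by_contra h
    push_neg at h
    exact hQne ((sum_homogeneousComponent Q).symm.trans (Finset.sum_eq_zero fun i _ => h i))
  set m := Nat.find hex with hm
  have hcm : homogeneousComponent m Q ≠ 0 := Nat.find_spec hex
  have hlt : ∀ k < m, homogeneousComponent k Q = 0 := fun k hk => not_not.mp (Nat.find_min hex hk)
  have hm0 : 0 < m := by
    rcases Nat.eq_zero_or_pos m with h | h
    swap
    · exact h
    exfalso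
    apply hcm
    rw [h, homogeneousComponent_zero]
    have h2 : constantCoeff Q = 0 := by
      rw [← eval_zero, hQeval 0]
      simpa using hx
    have h3 : coeff 0 Q = 0 := h2
    rw [h3, map_zero]
  have hmD : m ≤ Q.totalDegree := by
    by_contra h
    push_neg at h
    exact hcm (homogeneousComponent_eq_zero _ _ h)
  have hexp : ∀ (R : ℝ) (w : Fin n → ℝ),
      eval (fun i => R * w i) Q
        = R ^ m * ∑ k ∈ Finset.Icc m Q.totalDegree,
            R ^ (k - m) * eval w (homogeneousComponent k Q) := by
    intro R w
    conv_lhs => rw [← sum_homogeneousComponent Q]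
    rw [map_sum]
    rw [Finset.sum_congr rfl fun k _ =>
      aux_eval_smul (homogeneousComponent_isHomogeneous k Q) R w]
    rw [Finset.mul_sum]
    refine ((Finset.sum_subset ?_ ?_).symm).trans (Finset.sum_congr rfl ?_)
    · intro k hk; rw [Finset.mem_Icc] at hk; rw [Finset.mem_range]; omega
    · intro k hk1 hk2
      rw [Finset.mem_range] at hk1; rw [Finset.mem_Icc] at hk2
      have hklt : k < m := by omega
      rw [hlt k hklt]
      simp
    · intro k hk
      rw [Finset.mem_Icc] at hk
      rw [← mul_assoc, ← pow_add, Nat.add_sub_cancel' hk.1]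
  set F : ℝ × EuclideanSpace ℝ (Fin n) → ℝ := fun p =>
    ∑ k ∈ Finset.Icc m Q.totalDegree,
      p.1 ^ (k - m) * eval (fun i => p.2 i) (homogeneousComponent k Q) with hFdef
  have hFcont : Continuous F := by
    apply continuous_finset_sum
    intro k _
    exact (continuous_fst.pow _).mul
      ((MvPolynomial.continuous_eval _).comp (aux_coords_continuous.comp continuous_snd))
  obtain ⟨w₁, hw₁⟩ : ∃ w : Fin n → ℝ, eval w (homogeneousComponent m Q) ≠ 0 := by
    by_contra h
    push_neg at h
    exact hcm (MvPolynomial.funext fun v => by simp [h v])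
  have hw₁0 : w₁ ≠ 0 := by
    intro h0
    apply hw₁
    have h1 := aux_eval_smul (homogeneousComponent_isHomogeneous m Q) 0 w₁
    rw [zero_pow hm0.ne', zero_mul] at h1
    have h2 : (fun i => (0 : ℝ) * w₁ i) = w₁ := by funext i; rw [h0]; simp
    rw [h2] at h1
    exact h1
  set y₁ : EuclideanSpace ℝ (Fin n) := (EuclideanSpace.equiv (Fin n) ℝ).symm w₁ with hy₁def
  have hy₁coord : ∀ i, y₁ i = w₁ i := fun i => rfl
  have hy₁ : y₁ ≠ 0 := by
    intro h0
    apply hw₁0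
    funext i
    rw [← hy₁coord i, h0]
    rfl
  have hny₁ : 0 < ‖y₁‖ := norm_pos_iff.mpr hy₁
  set t : ℝ := (4 * ‖y₁‖)⁻¹ with htdef
  have ht : 0 < t := by positivity
  set y₀ : EuclideanSpace ℝ (Fin n) := t • y₁ with hy₀def
  have hy₀norm : ‖y₀‖ = 4⁻¹ := by
    rw [hy₀def, norm_smul, Real.norm_eq_abs, abs_of_pos ht, htdef]
    field_simp
  have hF0 : F (0, y₀) ≠ 0 := by
    have hsum : F (0, y₀) = eval (fun i => y₀ i) (homogeneousComponent m Q) := by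
      rw [hFdef]
      simp only
      rw [Finset.sum_eq_single_of_mem m (Finset.mem_Icc.mpr ⟨le_refl m, hmD⟩)]
      · rw [Nat.sub_self, pow_zero, one_mul]
      · intro k hk hkm
        rw [Finset.mem_Icc] at hk
        rw [zero_pow (by omega : k - m ≠ 0), zero_mul]
    rw [hsum]
    have hcoord : (fun i => y₀ i) = fun i => t * w₁ i := by
      funext i
      show (t • y₁) i = t * w₁ i
      rw [PiLp.smul_apply, smul_eq_mul, hy₁coord i]
    rw [hcoord, aux_eval_smul (homogeneousComponent_isHomogeneous m Q)]
    exact mul_ne_zero (pow_ne_zero _ (ne_of_gt ht)) hw₁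
  have hev0 := (hFcont.continuousAt (x := ((0 : ℝ), y₀))).eventually_ne hF0
  rw [Metric.eventually_nhds_iff] at hev0
  obtain ⟨δ, hδ0, hδ⟩ := hev0
  set r : ℝ := min δ (1 / 2) with hrdef
  have hr0 : 0 < r := lt_min hδ0 (by norm_num)
  have hrδ : r ≤ δ := min_le_left _ _
  have hrhalf : r ≤ 1 / 2 := min_le_right _ _
  -- the bound on radii in the porGamma set
  have hbound : ∀ R : ℝ, 0 < R →
      ∀ r' ∈ {r' : ℝ | 0 ≤ r' ∧ ∃ x' : EuclideanSpace ℝ (Fin n),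
        ball x' r' ⊆ ball x R \ Z}, r' ≤ 4 * R := by
    intro R hR r' hr'
    obtain ⟨hr'0, x', hsub⟩ := hr'
    rcases eq_or_lt_of_le hr'0 with h0 | h0
    · rw [← h0]; positivity
    have hx' : x' ∈ ball x R := (hsub (mem_ball_self h0)).1
    set v : EuclideanSpace ℝ (Fin n) := EuclideanSpace.single (⟨0, hn⟩ : Fin n) (1 : ℝ) with hvdef
    have hv : ‖v‖ = 1 := by rw [hvdef, EuclideanSpace.norm_single, norm_one]
    have h4 : ‖(r' / 2) • v‖ = r' / 2 := by
      rw [norm_smul, hv, mul_one, Real.norm_eq_abs, abs_of_pos (by linarith)]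
    have hz : x' + (r' / 2) • v ∈ ball x' r' := by
      rw [mem_ball, dist_eq_norm, add_sub_cancel_left, h4]
      linarith
    have hz2 := (hsub hz).1
    rw [mem_ball, dist_eq_norm] at hz2 hx'
    have h3 : ‖(r' / 2) • v‖ ≤ ‖x' + (r' / 2) • v - x‖ + ‖x' - x‖ := by
      have heq : (r' / 2) • v = (x' + (r' / 2) • v - x) - (x' - x) := by abel
      conv_lhs => rw [heq]
      exact norm_sub_le _ _
    rw [h4] at h3
    linarith
  have key : ∀ R : ℝ, 0 < R → R < δ → r * R ≤ porGamma x R Z := by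
    intro R hR hRδ
    apply le_csSup ⟨4 * R, fun r' hr' => hbound R hR r' hr'⟩
    refine ⟨by positivity, x + R • y₀, ?_⟩
    intro w hw
    rw [mem_ball] at hw
    constructor
    · rw [mem_ball]
      have h1 : dist (x + R • y₀) x = R * 4⁻¹ := by
        rw [dist_eq_norm, add_sub_cancel_left, norm_smul, hy₀norm, Real.norm_eq_abs,
          abs_of_pos hR]
      have h2 := dist_triangle w (x + R • y₀) x
      have h5 : r * R ≤ (1 / 2) * R := by nlinarith
      calc dist w x ≤ dist w (x + R • y₀) + dist (x + R • y₀) x := h2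
        _ < r * R + R * 4⁻¹ := by linarith
        _ ≤ (1 / 2) * R + R * 4⁻¹ := by linarith
        _ < R := by linarith
    · intro hwZ
      have hwZ' : eval (fun i => w i) P = 0 := hwZ
      set y : EuclideanSpace ℝ (Fin n) := R⁻¹ • (w - x) with hy
      have hyy : dist y y₀ < r := by
        rw [dist_eq_norm]
        have heq : y - y₀ = R⁻¹ • (w - (x + R • y₀)) := by
          have heq2 : w - (x + R • y₀) = (w - x) - R • y₀ := by abel
          rw [heq2, smul_sub, smul_smul, inv_mul_cancel₀ hR.ne', one_smul, hy]
        rw [heq, norm_smul, Real.norm_eq_abs, abs_of_pos (inv_pos.mpr hR)]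
        have h2 : ‖w - (x + R • y₀)‖ < r * R := by rw [← dist_eq_norm]; exact hw
        calc R⁻¹ * ‖w - (x + R • y₀)‖ < R⁻¹ * (r * R) :=
              mul_lt_mul_of_pos_left h2 (inv_pos.mpr hR)
          _ = r := by field_simp
      have hFne : F (R, y) ≠ 0 := by
        apply hδ
        rw [Prod.dist_eq]
        apply max_lt
        · rw [Real.dist_eq, sub_zero, abs_of_pos hR]; exact hRδ
        · exact lt_of_lt_of_le hyy hrδ
      apply hFne
      have h7 := hQeval (fun i => R * y i)
      rw [hexp R (fun i => y i)] at h7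
      have h8 : (fun i => R * y i + x i) = (fun i => w i) := by
        funext i
        have hyi : y i = R⁻¹ * (w i - x i) := by
          rw [hy]
          rw [PiLp.smul_apply, PiLp.sub_apply, smul_eq_mul]
        rw [hyi]
        field_simp
        ring
      rw [h8, hwZ'] at h7
      have h9 : F (R, y) = ∑ k ∈ Finset.Icc m Q.totalDegree,
          R ^ (k - m) * eval (fun i => y i) (homogeneousComponent k Q) := rfl
      rw [h9]
      rcases mul_eq_zero.mp h7 with h | h
      · exact absurd h (pow_ne_zero _ hR.ne')
      · exact h
  have hub : ∀ R : ℝ, 0 < R → porGamma x R Z / R ≤ 4 := by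
    intro R hR
    rw [div_le_iff₀ hR]
    apply csSup_le
    · exact ⟨0, le_refl 0, x, by simp⟩
    · intro r' hr'
      have := hbound R hR r' hr'
      linarith
  have hev : ∀ᶠ R in nhdsWithin (0 : ℝ) (Ioi 0), r ≤ porGamma x R Z / R := by
    filter_upwards [Ioo_mem_nhdsGT_of_mem (⟨le_refl (0 : ℝ), hδ0⟩ : (0 : ℝ) ∈ Ico 0 δ)]
      with R hR
    rw [le_div_iff₀ hR.1]
    exact key R hR.1 hR.2
  have hcb : IsCoboundedUnder (· ≥ ·) (nhdsWithin (0 : ℝ) (Ioi 0))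
      (fun R => porGamma x R Z / R) := by
    apply isCoboundedUnder_ge_of_eventually_le
    filter_upwards [self_mem_nhdsWithin] with R hR
    exact hub R hR
  have hle : r ≤ porosityAt x Z := le_liminf_of_le hcb hev
  exact lt_of_lt_of_le hr0 hle
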